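/- Let ψ be a negative psh function on a neighborhood of the unit ball in ℂ^n, ρ > 0 small, z in the unit ball, and x ∈ B(z, ρ^4). Then ψ'(x) := sup_{B(x,ρ^4)} ψ satisfies ψ'(x) ≤ (1 − cρ) · (n! π^{-n} ρ^{-4n}) ∫_{B(z,ρ^2)} ψ dZ for some constant c > 0 independent of x, z and ρ (for ρ small enough). -/

import Mathlib

open MeasureTheory Metric

/-- `ℂ^n` as a Euclidean space (with its Lebesgue measure). -/
abbrev Cn (n : ℕ) := EuclideanSpace ℂ (Fin n)

/-- Lebesgue measure on `ℂ^n`, via its real inner-product space structure. -/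
noncomputable instance (n : ℕ) : MeasureTheory.MeasureSpace (Cn n) :=
  letI : InnerProductSpace ℝ (Cn n) := InnerProductSpace.rclikeToReal ℂ _
  letI : MeasurableSpace (Cn n) := borel _
  haveI : BorelSpace (Cn n) := ⟨rfl⟩
  measureSpaceOfInnerProductSpace

/-- Send `x ∈ [0,∞] ⊆ EReal` to `ℝ≥0∞` (junk on negatives). -/
noncomputable def erealToENNReal (x : EReal) : ENNReal :=
  if x = ⊤ then ⊤ else ENNReal.ofReal x.toReal

/-- A negative plurisubharmonic function on `U ⊆ ℂ^n`, with values in `[-∞, 0)`: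
upper semicontinuous, negative, and satisfying the sub-mean value inequality on every
complex circle contained in `U` (written for `-u ≥ 0` via lower integrals). -/
def NegPSHOn {n : ℕ} (u : Cn n → EReal) (U : Set (Cn n)) : Prop :=
  UpperSemicontinuousOn u U ∧ (∀ z ∈ U, u z < 0) ∧
    ∀ z ∈ U, ∀ v : Cn n, ∀ r : ℝ, 0 < r →
      (∀ θ : ℝ, z + ((r : ℂ) * Complex.exp (θ * Complex.I)) • v ∈ U) →
      (∫⁻ θ in Set.Ioc (0 : ℝ) (2 * Real.pi),
          erealToENNReal (-(u (z + ((r : ℂ) * Complex.exp (θ * Complex.I)) • v))))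
        ≤ ENNReal.ofReal (2 * Real.pi) * erealToENNReal (-(u z))

/-- The sup-regularization `ψ'(z) = sup_{B(z,ρ⁴) ∩ U} ψ`. -/
noncomputable def supReg {n : ℕ} (u : Cn n → EReal) (U : Set (Cn n)) (ρ : ℝ)
    (z : Cn n) : EReal :=
  sSup (u '' (closedBall z (ρ ^ 4) ∩ U))

/-! ### Auxiliary instances -/

noncomputable instance (n : ℕ) : InnerProductSpace ℝ (Cn n) :=
  InnerProductSpace.rclikeToReal ℂ _

noncomputable instance (n : ℕ) : MeasurableSpace (Cn n) := borel (Cn n)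

instance (n : ℕ) : BorelSpace (Cn n) := ⟨rfl⟩

/-! ### Auxiliary lemmas about `erealToENNReal` -/

lemma lt_erealToENNReal_neg_iff {a : ENNReal} (ha : a ≠ ⊤) (x : EReal) :
    a < erealToENNReal (-x) ↔ x < ((-a.toReal : ℝ) : EReal) := by
  induction x using EReal.rec with
  | bot =>
      simp only [EReal.neg_bot, erealToENNReal, if_pos rfl]
      simp only [if_true]
      rw [iff_true_intro ha.lt_top, true_iff]
      exact EReal.bot_lt_coe _
  | coe r =>
      rw [show -(r : EReal) = ((-r : ℝ) : EReal) by exact_mod_cast rfl]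
      rw [erealToENNReal, if_neg (EReal.coe_ne_top _), EReal.toReal_coe]
      rw [ENNReal.lt_ofReal_iff_toReal_lt ha, EReal.coe_lt_coe_iff]
      constructor <;> intro h <;> linarith
  | top =>
      rw [show -(⊤ : EReal) = ⊥ from rfl]
      rw [erealToENNReal, if_neg (by simp), EReal.toReal_bot, ENNReal.ofReal_zero]
      simp only [not_lt_zero', false_iff, not_lt]
      exact le_top

lemma le_erealToENNReal_neg_sSup {T : Set EReal} {A : ENNReal}
    (h : ∀ t ∈ T, A ≤ erealToENNReal (-t)) : A ≤ erealToENNReal (-(sSup T)) := by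
  refine le_of_forall_lt fun a ha => ?_
  have ha_top : a ≠ ⊤ := ha.ne_top
  obtain ⟨a', haa', ha'A⟩ := exists_between ha
  have ha'_top : a' ≠ ⊤ := ha'A.ne_top
  have h2 : sSup T ≤ ((-a'.toReal : ℝ) : EReal) :=
    sSup_le fun t ht =>
      ((lt_erealToENNReal_neg_iff ha'_top t).1 (lt_of_lt_of_le ha'A (h t ht))).le
  refine (lt_erealToENNReal_neg_iff ha_top _).2 (h2.trans_lt ?_)
  have : a.toReal < a'.toReal := ENNReal.toReal_strict_mono ha'_top haa'
  exact_mod_cast EReal.coe_lt_coe_iff.2 (by linarith)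

/-- measurable extension of `w ↦ erealToENNReal (-(u w))` by `0` outside `U`. -/
noncomputable def gfun {n : ℕ} (u : Cn n → EReal) (U : Set (Cn n)) : Cn n → ENNReal :=
  U.indicator (fun w => erealToENNReal (-(u w)))

lemma measurable_gfun {n : ℕ} {u : Cn n → EReal} {U : Set (Cn n)} (hU : IsOpen U)
    (husc : UpperSemicontinuousOn u U) : Measurable (gfun u U) := by
  apply measurable_of_Ioi
  intro a
  rcases eq_or_ne a ⊤ with rfl | ha
  · simp [Set.Ioi_top]
  · have : gfun u U ⁻¹' Set.Ioi a = {w | w ∈ U ∧ u w < ((-a.toReal : ℝ) : EReal)} := by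
      ext w
      simp only [Set.mem_preimage, Set.mem_Ioi, gfun, Set.mem_setOf_eq]
      by_cases hw : w ∈ U
      · rw [Set.indicator_of_mem hw, iff_true_intro hw, true_and]
        exact lt_erealToENNReal_neg_iff ha (u w)
      · rw [Set.indicator_of_notMem hw]
        simp [hw]
    rw [this]
    have : IsOpen {w | w ∈ U ∧ u w < ((-a.toReal : ℝ) : EReal)} := by
      rw [isOpen_iff_mem_nhds]
      rintro x ⟨hxU, hxlt⟩
      have h1 := husc x hxU _ hxlt
      rw [nhdsWithin_eq_nhds.2 (hU.mem_nhds hxU)] at h1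
      filter_upwards [h1, hU.mem_nhds hxU] with w hw1 hw2
      exact ⟨hw2, hw1⟩
    exact this.measurableSet

/-- multiplication by a unit complex number as a real-linear isometry equivalence. -/
noncomputable def rotCn (n : ℕ) (c : ℂ) (hc : ‖c‖ = 1) : Cn n ≃ₗᵢ[ℝ] Cn n :=
  { (LinearEquiv.smulOfNeZero ℂ (Cn n) c
      (by intro h; rw [h] at hc; simp at hc)).restrictScalars ℝ with
    norm_map' := fun x => by
      simp only [LinearEquiv.coe_coe, LinearEquiv.restrictScalars_apply,
        LinearEquiv.smulOfNeZero_apply]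
      rw [norm_smul, hc, one_mul] }

/-- The sub-mean value inequality on balls, derived from the one on circles by
averaging over rotations. -/
lemma ball_submean {n : ℕ} {U : Set (Cn n)} {u : Cn n → EReal}
    (hu : NegPSHOn u U) (hmeas : Measurable (gfun u U))
    {y : Cn n} {R : ℝ} (hyU : y ∈ U) (hUsub : closedBall y R ⊆ U) :
    ∫⁻ w in ball y R, gfun u U w ≤ volume (ball y R) * gfun u U y := by
  set g := gfun u U with hg
  set c : ℝ → ℂ := fun θ => ((1 : ℝ) : ℂ) * Complex.exp (θ * Complex.I) with hcdef
  have hcnorm : ∀ θ : ℝ, ‖c θ‖ = 1 := by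
    intro θ
    simp [hcdef, Complex.norm_exp_ofReal_mul_I]
  -- translation
  have htr : ∫⁻ w in ball y R, g w = ∫⁻ w in ball (0 : Cn n) R, g (y + w) := by
    have hemb : MeasurableEmbedding (fun w : Cn n => y + w) :=
      (Homeomorph.addLeft y).measurableEmbedding
    have h := (measurePreserving_add_left volume y).setLIntegral_comp_preimage_emb hemb
      g (ball y R)
    have hpre : (fun w : Cn n => y + w) ⁻¹' ball y R = ball (0 : Cn n) R := by
      ext w
      simp [mem_ball, dist_eq_norm]
    rw [hpre] at h
    exact h.symm
  -- rotation invariance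
  have hrot : ∀ θ : ℝ, ∫⁻ w in ball (0 : Cn n) R, g (y + c θ • w)
      = ∫⁻ w in ball (0 : Cn n) R, g (y + w) := by
    intro θ
    have hmp : MeasurePreserving (fun w : Cn n => c θ • w) volume volume :=
      (rotCn n (c θ) (hcnorm θ)).measurePreserving
    have hemb : MeasurableEmbedding (fun w : Cn n => c θ • w) := by
      exact (rotCn n (c θ) (hcnorm θ)).toHomeomorph.measurableEmbedding
    have h := hmp.setLIntegral_comp_preimage_emb hemb (fun w => g (y + w)) (ball (0 : Cn n) R)
    have hpre : (fun w : Cn n => c θ • w) ⁻¹' ball (0 : Cn n) R = ball (0 : Cn n) R := by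
      ext w
      simp [mem_ball, dist_eq_norm, norm_smul, hcnorm θ]
    rw [hpre] at h
    exact h
  -- circle sub-mean value at y with direction w
  have hcirc : ∀ w : Cn n, w ∈ ball (0 : Cn n) R →
      ∫⁻ θ in Set.Ioc (0 : ℝ) (2 * Real.pi), g (y + c θ • w)
        ≤ ENNReal.ofReal (2 * Real.pi) * g y := by
    intro w hw
    have hmem : ∀ θ : ℝ, y + c θ • w ∈ U := by
      intro θ
      apply hUsub
      rw [mem_closedBall, dist_eq_norm, add_sub_cancel_left, norm_smul, hcnorm θ, one_mul]
      exact (mem_ball_zero_iff.1 hw).le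
    have h1 : ∀ θ : ℝ, g (y + c θ • w) = erealToENNReal (-(u (y + c θ • w))) := fun θ =>
      Set.indicator_of_mem (hmem θ) _
    calc ∫⁻ θ in Set.Ioc (0 : ℝ) (2 * Real.pi), g (y + c θ • w)
        = ∫⁻ θ in Set.Ioc (0 : ℝ) (2 * Real.pi),
            erealToENNReal (-(u (y + (((1 : ℝ) : ℂ) * Complex.exp (θ * Complex.I)) • w))) := by
          apply lintegral_congr
          intro θ
          rw [h1 θ]
      _ ≤ ENNReal.ofReal (2 * Real.pi) * erealToENNReal (-(u y)) := by
          have := hu.2.2 y hyU w 1 one_pos (by intro θ; exact hmem θ)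
          exact this
      _ = ENNReal.ofReal (2 * Real.pi) * g y := by
          simp only [hg, gfun, Set.indicator_of_mem hyU]
  -- measurability for Tonelli
  have hcont : Continuous fun p : ℝ × Cn n => y + c p.1 • p.2 := by
    apply continuous_const.add
    refine Continuous.smul (f := fun p : ℝ × Cn n => c p.1) ?_ continuous_snd
    exact continuous_const.mul (Complex.continuous_exp.comp
      ((Complex.continuous_ofReal.comp continuous_fst).mul continuous_const))
  have hFmeas : AEMeasurable (Function.uncurry fun (θ : ℝ) (w : Cn n) => g (y + c θ • w))
      ((volume.restrict (Set.Ioc (0:ℝ) (2*Real.pi))).prod (volume.restrict (ball (0:Cn n) R))) :=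
    (hmeas.comp hcont.measurable).aemeasurable
  have key : ENNReal.ofReal (2 * Real.pi) * ∫⁻ w in ball (0 : Cn n) R, g (y + w)
      ≤ ENNReal.ofReal (2 * Real.pi) * (volume (ball (0:Cn n) R) * g y) := by
    have swap := lintegral_lintegral_swap (μ := volume.restrict (Set.Ioc (0:ℝ) (2*Real.pi)))
      (ν := volume.restrict (ball (0:Cn n) R))
      (f := fun θ w => g (y + c θ • w)) hFmeas
    calc ENNReal.ofReal (2 * Real.pi) * ∫⁻ w in ball (0:Cn n) R, g (y + w)
        = ∫⁻ θ in Set.Ioc (0:ℝ) (2*Real.pi), ∫⁻ w in ball (0:Cn n) R, g (y + c θ • w) := by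
          rw [lintegral_congr fun θ => hrot θ, setLIntegral_const, Real.volume_Ioc,
            mul_comm, sub_zero]
      _ = ∫⁻ w in ball (0:Cn n) R, ∫⁻ θ in Set.Ioc (0:ℝ) (2*Real.pi), g (y + c θ • w) := swap
      _ ≤ ∫⁻ w in ball (0:Cn n) R, ENNReal.ofReal (2 * Real.pi) * g y :=
          setLIntegral_mono measurable_const hcirc
      _ = ENNReal.ofReal (2 * Real.pi) * (volume (ball (0:Cn n) R) * g y) := by
          rw [setLIntegral_const, mul_comm, mul_left_comm]
  have h2pi0 : (ENNReal.ofReal (2*Real.pi)) ≠ 0 :=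
    ne_of_gt (ENNReal.ofReal_pos.2 Real.two_pi_pos)
  have hvol : volume (ball y R) = volume (ball (0:Cn n) R) :=
    MeasureTheory.Measure.addHaar_ball_center volume y R
  rw [htr, hvol]
  exact (ENNReal.mul_le_mul_iff_right h2pi0 ENNReal.ofReal_ne_top).1 key

lemma Cn.volume_ball_le {n : ℕ} (y : Cn n) {R : ℝ} (hR : 0 ≤ R) :
    volume (ball y R) ≤ ENNReal.ofReal (Real.pi ^ n / (n.factorial : ℝ) * R ^ (2 * n)) := by
  cases n with
  | zero =>
      have hss : Subsingleton (Cn 0) := by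
        constructor
        intro a b
        have h : ∀ w : Cn 0, w = 0 := fun w => by ext i; exact Fin.elim0 i
        rw [h a, h b]
      have hb := (stdOrthonormalBasis ℝ (Cn 0)).volume_parallelepiped
      have hzero : (0 : Cn 0) ∈ parallelepiped (stdOrthonormalBasis ℝ (Cn 0)) := by
        rw [mem_parallelepiped_iff]
        exact ⟨0, Set.mem_Icc.2 ⟨le_rfl, zero_le_one⟩, by simp⟩
      have huniv : parallelepiped ⇑(stdOrthonormalBasis ℝ (Cn 0)) = Set.univ :=
        Set.eq_univ_of_forall fun w => (Subsingleton.elim w 0) ▸ hzero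
      rw [huniv] at hb
      calc volume (ball y R) ≤ volume (Set.univ : Set (Cn 0)) := measure_mono (Set.subset_univ _)
        _ = 1 := hb
        _ = ENNReal.ofReal (Real.pi ^ 0 / (Nat.factorial 0 : ℝ) * R ^ (2 * 0)) := by
            norm_num
  | succ m =>
      haveI : Nontrivial (Cn (m + 1)) := by
        refine ⟨EuclideanSpace.single 0 1, 0, fun h => ?_⟩
        have := congrArg (fun w : Cn (m+1) => ‖w‖) h
        simp [EuclideanSpace.norm_single] at this
      have hfr : Module.finrank ℝ (Cn (m + 1)) = 2 * (m + 1) := by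
        rw [← Module.finrank_mul_finrank ℝ ℂ (Cn (m + 1)), Complex.finrank_real_complex,
          finrank_euclideanSpace_fin]
      rw [InnerProductSpace.volume_ball y R, hfr]
      have h1 : Real.sqrt Real.pi ^ (2 * (m + 1)) = Real.pi ^ (m + 1) := by
        rw [mul_comm, pow_mul, ← pow_mul, mul_comm (m+1) 2, pow_mul]
        rw [Real.sq_sqrt Real.pi_pos.le]
      have h2 : ((2 * (m + 1) : ℕ) : ℝ) / 2 + 1 = ((m + 1 : ℕ) : ℝ) + 1 := by
        push_cast; ring
      rw [h1, h2, Real.Gamma_nat_eq_factorial, ← ENNReal.ofReal_pow hR,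
        ← ENNReal.ofReal_mul (by positivity)]
      exact ENNReal.ofReal_le_ofReal (le_of_eq (by ring))

lemma factor_bound {n : ℕ} {ρ : ℝ} (hρ : 0 < ρ) (hρ1 : ρ * (4 * n + 1) ≤ 1) (y : Cn n) :
    ENNReal.ofReal ((1 - 1 * ρ) * (Nat.factorial n : ℝ) / (Real.pi ^ n * ρ ^ (4 * n)))
      * volume (ball y (ρ ^ 2 + 2 * ρ ^ 4)) ≤ 1 := by
  have hn1 : (1 : ℝ) ≤ 4 * n + 1 := by
    have : (0:ℝ) ≤ (n:ℝ) := Nat.cast_nonneg n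
    linarith
  have hρle1 : ρ ≤ 1 := by nlinarith
  have hR : (0 : ℝ) ≤ ρ ^ 2 + 2 * ρ ^ 4 := by positivity
  have hP : (0 : ℝ) ≤ (1 - 1 * ρ) * (Nat.factorial n : ℝ) / (Real.pi ^ n * ρ ^ (4 * n)) := by
    have : (0:ℝ) ≤ 1 - 1 * ρ := by linarith
    positivity
  have hfact : (0:ℝ) < (Nat.factorial n : ℝ) := by
    exact_mod_cast Nat.factorial_pos n
  have hπ : (0:ℝ) < Real.pi ^ n := by positivity
  have hρn : (0:ℝ) < ρ ^ (4 * n) := by positivity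
  have hRfact : (ρ ^ 2 + 2 * ρ ^ 4) ^ (2 * n) = ρ ^ (4 * n) * (1 + 2 * ρ ^ 2) ^ (2 * n) := by
    rw [show ρ ^ 2 + 2 * ρ ^ 4 = ρ ^ 2 * (1 + 2 * ρ ^ 2) by ring, mul_pow, ← pow_mul]
    congr 1
    ring
  have e1 : (1 + 2 * ρ ^ 2) ^ (2 * n) ≤ Real.exp ρ := by
    have h1 : (1 + 2 * ρ ^ 2) ≤ Real.exp (2 * ρ ^ 2) := by
      have := Real.add_one_le_exp (2 * ρ ^ 2); linarith
    have h2 : (1 + 2 * ρ ^ 2) ^ (2 * n) ≤ Real.exp (2 * ρ ^ 2) ^ (2 * n) :=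
      pow_le_pow_left₀ (by positivity) h1 _
    rw [← Real.exp_nat_mul] at h2
    refine h2.trans (Real.exp_le_exp.2 ?_)
    push_cast
    nlinarith
  have e2 : (1 - ρ) * Real.exp ρ ≤ 1 := by
    have h3 := Real.add_one_le_exp (-ρ)
    have h4 : Real.exp (-ρ) * Real.exp ρ = 1 := by rw [← Real.exp_add]; simp
    nlinarith [Real.exp_pos ρ]
  have real_ineq : ((1 - 1 * ρ) * (Nat.factorial n : ℝ) / (Real.pi ^ n * ρ ^ (4 * n)))
      * (Real.pi ^ n / (Nat.factorial n : ℝ) * (ρ ^ 2 + 2 * ρ ^ 4) ^ (2 * n)) ≤ 1 := by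
    rw [hRfact]
    have heq : ((1 - 1 * ρ) * (Nat.factorial n : ℝ) / (Real.pi ^ n * ρ ^ (4 * n)))
        * (Real.pi ^ n / (Nat.factorial n : ℝ) * (ρ ^ (4 * n) * (1 + 2 * ρ ^ 2) ^ (2 * n)))
        = (1 - ρ) * (1 + 2 * ρ ^ 2) ^ (2 * n) := by
      field_simp
    rw [heq]
    calc (1 - ρ) * (1 + 2 * ρ ^ 2) ^ (2 * n) ≤ (1 - ρ) * Real.exp ρ := by
          apply mul_le_mul_of_nonneg_left e1 (by linarith)
      _ ≤ 1 := e2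
  calc ENNReal.ofReal ((1 - 1 * ρ) * (Nat.factorial n : ℝ) / (Real.pi ^ n * ρ ^ (4 * n)))
        * volume (ball y (ρ ^ 2 + 2 * ρ ^ 4))
      ≤ ENNReal.ofReal ((1 - 1 * ρ) * (Nat.factorial n : ℝ) / (Real.pi ^ n * ρ ^ (4 * n)))
        * ENNReal.ofReal (Real.pi ^ n / (Nat.factorial n : ℝ) * (ρ ^ 2 + 2 * ρ ^ 4) ^ (2 * n)) :=
        mul_le_mul_right (Cn.volume_ball_le y hR) _
    _ = ENNReal.ofReal (((1 - 1 * ρ) * (Nat.factorial n : ℝ) / (Real.pi ^ n * ρ ^ (4 * n)))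
        * (Real.pi ^ n / (Nat.factorial n : ℝ) * (ρ ^ 2 + 2 * ρ ^ 4) ^ (2 * n))) :=
        (ENNReal.ofReal_mul hP).symm
    _ ≤ ENNReal.ofReal 1 := ENNReal.ofReal_le_ofReal real_ineq
    _ = 1 := ENNReal.ofReal_one

/-- Let `ψ` be a negative psh function on a neighborhood of the closed unit ball of `ℂ^n`
and `ψ'(x) := sup_{B(x,ρ⁴)} ψ`.  Then there is `c > 0` such that for all sufficiently
small `ρ > 0`, every `z` in the unit ball and every `x ∈ B(z,ρ⁴)`,
`ψ'(x) ≤ (1 − cρ) · (n! π^{-n} ρ^{-4n}) ∫_{B(z,ρ²)} ψ dZ`; equivalently, multiplying by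
`−1`, `(1 − cρ) · n!/(π^n ρ^{4n}) · ∫_{B(z,ρ²)} (−ψ) dZ ≤ −ψ'(x)`. -/
theorem stmt_4 {n : ℕ} (U : Set (Cn n)) (hU : IsOpen U)
    (hball : closedBall (0 : Cn n) 1 ⊆ U)
    (u : Cn n → EReal) (hu : NegPSHOn u U) :
    ∃ c : ℝ, 0 < c ∧ ∃ ρ₀ : ℝ, 0 < ρ₀ ∧ ∀ ρ : ℝ, 0 < ρ → ρ ≤ ρ₀ →
      ∀ z ∈ closedBall (0 : Cn n) 1, ∀ x ∈ closedBall z (ρ ^ 4),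
        ENNReal.ofReal ((1 - c * ρ) * (Nat.factorial n : ℝ) /
            (Real.pi ^ n * ρ ^ (4 * n))) *
          (∫⁻ w in ball z (ρ ^ 2), erealToENNReal (-(u w)))
            ≤ erealToENNReal (-(supReg u U ρ x)) := by
  -- thicken the closed unit ball inside `U`
  obtain ⟨ε, hε, hεU⟩ : ∃ ε > 0, closedBall (0 : Cn n) (1 + ε) ⊆ U := by
    obtain ⟨ε, hε, hsub⟩ := (isCompact_closedBall (0 : Cn n) 1).exists_cthickening_subset_open
      hU hball
    refine ⟨ε, hε, ?_⟩
    rw [show (1:ℝ) + ε = ε + 1 from add_comm 1 ε,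
      ← cthickening_closedBall hε.le zero_le_one]
    exact hsub
  have hmeas := measurable_gfun hU hu.1
  refine ⟨1, one_pos, min (1 / (4 * n + 1)) (ε / 5), ?_, ?_⟩
  · have h1 : (0:ℝ) < 4 * n + 1 := by positivity
    exact lt_min (by positivity) (by positivity)
  intro ρ hρ hρ₀ z hz x hx
  have hρ1 : ρ * (4 * n + 1) ≤ 1 := by
    have h1 : (0:ℝ) < 4 * n + 1 := by positivity
    have := (le_min_iff.1 hρ₀).1
    rw [le_div_iff₀ h1] at this
    linarith
  have hρε : 5 * ρ ≤ ε := by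
    have := (le_min_iff.1 hρ₀).2
    linarith
  have hn1 : (1 : ℝ) ≤ 4 * n + 1 := by
    have : (0:ℝ) ≤ (n:ℝ) := Nat.cast_nonneg n
    linarith
  have hρle1 : ρ ≤ 1 := by nlinarith
  set R : ℝ := ρ ^ 2 + 2 * ρ ^ 4 with hRdef
  -- reduce to a bound for each point of `closedBall x (ρ^4) ∩ U`
  rw [supReg]
  apply le_erealToENNReal_neg_sSup
  rintro t ⟨y, ⟨hy1, hy2⟩, rfl⟩
  -- geometry
  have hzx : dist z x ≤ ρ ^ 4 := mem_closedBall'.1 hx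
  have hyx : dist y x ≤ ρ ^ 4 := mem_closedBall.1 hy1
  have hcb : closedBall y R ⊆ U := by
    intro w hw
    apply hεU
    rw [mem_closedBall]
    have h1 : dist w (0 : Cn n) ≤ dist w y + dist y x + dist x z + dist z 0 := by
      have := dist_triangle4 w y x (0 : Cn n)
      have h2 := dist_triangle x z (0 : Cn n)
      linarith
    have hz0 : dist z (0 : Cn n) ≤ 1 := mem_closedBall.1 hz
    have hxz : dist x z ≤ ρ ^ 4 := mem_closedBall.1 hx
    have hwy : dist w y ≤ R := mem_closedBall.1 hw
    have h3 : ρ ^ 3 ≤ 1 := pow_le_one₀ hρ.le hρle1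
    have hρ4 : ρ ^ 4 ≤ ρ := by nlinarith
    have hρ2 : ρ ^ 2 ≤ ρ := by nlinarith
    have : ρ ^ 2 + 4 * ρ ^ 4 ≤ ε := by nlinarith
    rw [hRdef] at hwy
    linarith
  have hzball : ball z (ρ ^ 2) ⊆ ball y R := by
    intro w hw
    rw [mem_ball] at hw ⊢
    have h1 : dist w y ≤ dist w z + (dist z x + dist x y) := by
      have a := dist_triangle w z y
      have b := dist_triangle z x y
      linarith
    have hxy : dist x y ≤ ρ ^ 4 := mem_closedBall'.1 hy1
    rw [hRdef]
    linarith
  have hballU : ball z (ρ ^ 2) ⊆ U := fun w hw =>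
    hcb (ball_subset_closedBall (hzball hw))
  -- replace the integrand by its measurable extension
  have heq : ∫⁻ w in ball z (ρ ^ 2), erealToENNReal (-(u w))
      = ∫⁻ w in ball z (ρ ^ 2), gfun u U w := by
    apply setLIntegral_congr_fun measurableSet_ball
    exact fun w hw =>
      (Set.indicator_of_mem (hballU hw) fun w => erealToENNReal (-(u w))).symm
  rw [heq]
  calc ENNReal.ofReal ((1 - 1 * ρ) * (Nat.factorial n : ℝ) / (Real.pi ^ n * ρ ^ (4 * n)))
        * ∫⁻ w in ball z (ρ ^ 2), gfun u U w
      ≤ ENNReal.ofReal ((1 - 1 * ρ) * (Nat.factorial n : ℝ) / (Real.pi ^ n * ρ ^ (4 * n)))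
        * ∫⁻ w in ball y R, gfun u U w :=
        mul_le_mul_right (lintegral_mono_set hzball) _
    _ ≤ ENNReal.ofReal ((1 - 1 * ρ) * (Nat.factorial n : ℝ) / (Real.pi ^ n * ρ ^ (4 * n)))
        * (volume (ball y R) * gfun u U y) :=
        mul_le_mul_right (ball_submean hu hmeas hy2 hcb) _
    _ = (ENNReal.ofReal ((1 - 1 * ρ) * (Nat.factorial n : ℝ) / (Real.pi ^ n * ρ ^ (4 * n)))
        * volume (ball y R)) * gfun u U y := by rw [mul_assoc]
    _ ≤ 1 * gfun u U y := mul_le_mul_left (factor_bound hρ hρ1 y) _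
    _ = erealToENNReal (-(u y)) := by
        rw [one_mul, gfun, Set.indicator_of_mem hy2]
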